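/- The harmonic edit distance d defines a metric on the set of lists over a type α: it is symmetric, vanishes exactly on equal lists, and satisfies the triangle inequality. -/

import Mathlib

open List

noncomputable def H (n : ℕ) : ℝ := ∑ i ∈ Finset.range n, (1 : ℝ) / (i + 1)

noncomputable def lcsLen {α : Type*} (A B : List α) : ℕ :=
  sSup {n : ℕ | ∃ L : List α, L.Sublist A ∧ L.Sublist B ∧ L.length = n}

noncomputable def d {α : Type*} (A B : List α) : ℝ :=
  2 * H (A.length + B.length - lcsLen A B) - H A.length - H B.length

section aux

variable {α : Type*}

lemma lcs_set_nonempty (A B : List α) :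
    {n : ℕ | ∃ L : List α, L.Sublist A ∧ L.Sublist B ∧ L.length = n}.Nonempty :=
  ⟨0, [], nil_sublist A, nil_sublist B, rfl⟩

lemma lcs_set_bdd (A B : List α) :
    BddAbove {n : ℕ | ∃ L : List α, L.Sublist A ∧ L.Sublist B ∧ L.length = n} :=
  ⟨A.length, fun n ⟨L, h1, _, h3⟩ => h3 ▸ h1.length_le⟩

lemma exists_lcs (A B : List α) :
    ∃ L : List α, L.Sublist A ∧ L.Sublist B ∧ L.length = lcsLen A B :=
  Nat.sSup_mem (lcs_set_nonempty A B) (lcs_set_bdd A B)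

lemma le_lcsLen {A B L : List α} (h1 : L.Sublist A) (h2 : L.Sublist B) :
    L.length ≤ lcsLen A B :=
  le_csSup (lcs_set_bdd A B) ⟨L, h1, h2, rfl⟩

lemma lcsLen_le_left (A B : List α) : lcsLen A B ≤ A.length := by
  obtain ⟨L, h1, _, h3⟩ := exists_lcs A B
  exact h3 ▸ h1.length_le

lemma lcsLen_le_right (A B : List α) : lcsLen A B ≤ B.length := by
  obtain ⟨L, _, h2, h3⟩ := exists_lcs A B
  exact h3 ▸ h2.length_le

lemma lcsLen_comm (A B : List α) : lcsLen A B = lcsLen B A := by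
  unfold lcsLen
  congr 1
  ext n
  exact ⟨fun ⟨L, h1, h2, h3⟩ => ⟨L, h2, h1, h3⟩, fun ⟨L, h1, h2, h3⟩ => ⟨L, h2, h1, h3⟩⟩

lemma lcsLen_self (A : List α) : lcsLen A A = A.length :=
  le_antisymm (lcsLen_le_left A A) (le_lcsLen (Sublist.refl A) (Sublist.refl A))

lemma H_mono : Monotone H := by
  intro m n hmn
  apply Finset.sum_le_sum_of_subset_of_nonneg (Finset.range_subset_range.2 hmn)
  intro i _ _
  positivity

lemma H_strictMono : StrictMono H := by
  intro m n hmn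
  have : H (m + 1) ≤ H n := H_mono hmn
  have h2 : H m < H (m + 1) := by
    unfold H
    rw [Finset.sum_range_succ]
    have : (0:ℝ) < 1 / (m + 1) := by positivity
    linarith
  linarith

lemma H_add (n m : ℕ) : H (n + m) = H n + ∑ j ∈ Finset.range m, (1:ℝ) / (n + j + 1) := by
  unfold H
  rw [Finset.sum_range_add]
  congr 1
  apply Finset.sum_congr rfl
  intro j _
  push_cast
  ring_nf

lemma H_tri {b p q : ℕ} (hp : b ≤ p) (hq : b ≤ q) : H (p + q - b) + H b ≤ H p + H q := by
  obtain ⟨s, rfl⟩ := Nat.exists_eq_add_of_le hp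
  obtain ⟨t, rfl⟩ := Nat.exists_eq_add_of_le hq
  have hm : b + s + (b + t) - b = (b + t) + s := by omega
  rw [hm, H_add (b + t) s, H_add b s]
  have : ∑ j ∈ Finset.range s, (1:ℝ) / (↑(b + t) + ↑j + 1) ≤
      ∑ j ∈ Finset.range s, (1:ℝ) / (↑b + ↑j + 1) := by
    apply Finset.sum_le_sum
    intro j _
    apply one_div_le_one_div_of_le
    · positivity
    · push_cast; linarith [Nat.cast_nonneg (α := ℝ) t]
  linarith

/-- Two sublists of `B` have a common sublist of length at least `|L1| + |L2| - |B|`. -/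
lemma common_sub (B : List α) : ∀ L1 L2 : List α, L1.Sublist B → L2.Sublist B →
    ∃ L : List α, L.Sublist L1 ∧ L.Sublist L2 ∧
      L1.length + L2.length ≤ L.length + B.length := by
  induction B with
  | nil =>
    intro L1 L2 h1 h2
    rw [List.sublist_nil] at h1 h2
    subst h1; subst h2
    exact ⟨[], Sublist.refl _, Sublist.refl _, le_refl _⟩
  | cons b B ih =>
    intro L1 L2 h1 h2
    cases h1 with
    | cons _ h1' =>
      cases h2 with
      | cons _ h2' =>
        obtain ⟨L, hL1, hL2, hlen⟩ := ih L1 L2 h1' h2'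
        exact ⟨L, hL1, hL2, by simp only [List.length_cons]; omega⟩
      | cons_cons _ h2' =>
        obtain ⟨L, hL1, hL2, hlen⟩ := ih L1 _ h1' h2'
        exact ⟨L, hL1, hL2.cons b, by simp only [List.length_cons]; omega⟩
    | cons_cons _ h1' =>
      cases h2 with
      | cons _ h2' =>
        obtain ⟨L, hL1, hL2, hlen⟩ := ih _ L2 h1' h2'
        exact ⟨L, hL1.cons b, hL2, by simp only [List.length_cons]; omega⟩
      | cons_cons _ h2' =>
        obtain ⟨L, hL1, hL2, hlen⟩ := ih _ _ h1' h2'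
        exact ⟨b :: L, hL1.cons₂ b, hL2.cons₂ b, by simp only [List.length_cons]; omega⟩

lemma lcs_triangle (A B C : List α) :
    lcsLen A B + lcsLen B C ≤ lcsLen A C + B.length := by
  obtain ⟨L1, h1A, h1B, h1len⟩ := exists_lcs A B
  obtain ⟨L2, h2B, h2C, h2len⟩ := exists_lcs B C
  obtain ⟨L, hL1, hL2, hlen⟩ := common_sub B L1 L2 h1B h2B
  have hAC : L.length ≤ lcsLen A C := le_lcsLen (hL1.trans h1A) (hL2.trans h2C)
  omega

end aux

theorem stmt14 {α : Type*} :
    (∀ A B : List α, d A B = d B A) ∧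
    (∀ A B : List α, d A B = 0 ↔ A = B) ∧
    (∀ A B C : List α, d A C ≤ d A B + d B C) := by
  refine ⟨?_, ?_, ?_⟩
  · intro A B
    unfold d
    rw [lcsLen_comm, Nat.add_comm]
    ring
  · intro A B
    constructor
    · intro h
      unfold d at h
      set a := A.length
      set b := B.length
      set l := lcsLen A B with hl
      have hla : l ≤ a := lcsLen_le_left A B
      have hlb : l ≤ b := lcsLen_le_right A B
      have hna : a ≤ a + b - l := by omega
      have hnb : b ≤ a + b - l := by omega
      have h1 : H a ≤ H (a + b - l) := H_mono hna
      have h2 : H b ≤ H (a + b - l) := H_mono hnb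
      have ea : H (a + b - l) = H a := by linarith
      have eb : H (a + b - l) = H b := by linarith
      have hna' : a + b - l = a := H_strictMono.injective ea
      have hnb' : a + b - l = b := H_strictMono.injective eb
      have hlA : l = a := by omega
      have hlB : l = b := by omega
      obtain ⟨L, hLA, hLB, hLlen⟩ := exists_lcs A B
      have hA : L = A := hLA.eq_of_length (by omega)
      have hB : L = B := hLB.eq_of_length (by omega)
      rw [← hA, hB]
    · rintro rfl
      unfold d
      rw [lcsLen_self]
      have : A.length + A.length - A.length = A.length := by omega
      rw [this]
      ring
  · intro A B C
    unfold d
    set a := A.length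
    set b := B.length
    set c := C.length
    set lab := lcsLen A B
    set lbc := lcsLen B C
    set lac := lcsLen A C
    have h1 : lab ≤ a := lcsLen_le_left A B
    have h2 : lab ≤ b := lcsLen_le_right A B
    have h3 : lbc ≤ b := lcsLen_le_left B C
    have h4 : lbc ≤ c := lcsLen_le_right B C
    have h5 : lac ≤ a := lcsLen_le_left A C
    have h6 : lac ≤ c := lcsLen_le_right A C
    have htri : lab + lbc ≤ lac + b := lcs_triangle A B C
    set p := a + b - lab
    set q := b + c - lbc
    set m := a + c - lac
    have hbp : b ≤ p := by omega
    have hbq : b ≤ q := by omega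
    have hmpq : m ≤ p + q - b := by omega
    have hH1 : H m ≤ H (p + q - b) := H_mono hmpq
    have hH2 : H (p + q - b) + H b ≤ H p + H q := H_tri hbp hbq
    linarith
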